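/- Let N be a positive integer, ρ > 0, and y ∈ (0,1) with p_N(y) < 0 (equivalently, y* < y < 1). Then A has a positive real eigenvalue: there exists a real λ > 0 with det(A − λ I_{N+5}) = 0. -/

import Mathlib

/-- The `(N+5)×(N+5)` Jacobian matrix `A(N,ρ,y)` of the reduced silicosis system at the
equilibrium parametrized by `y`, with `ρ = kr` (block form `[[B,C],[D,E]]`). -/
noncomputable def Amat (N : ℕ) (ρ y : ℝ) : Matrix (Fin (N + 5)) (Fin (N + 5)) ℝ :=
  Matrix.of fun i j =>
    if i.val = 0 then
      if j.val = 0 then -ρ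
      else if j.val = 1 then -y / (1 - y)
      else if j.val = 2 then 1
      else 0
    else if i.val = 1 then
      if j.val = 1 then -1 else 0
    else if i.val = 2 then
      if j.val = 0 then ρ * y ^ N * (1 + (N : ℝ) * (1 - y))
      else if j.val = 2 then -1
      else if j.val = 3 then y / (1 - y)
      else if j.val = N + 4 then (N : ℝ) * y / (1 - y)
      else 0
    else if i.val = 3 then
      if j.val = 0 then ρ * y ^ (N - 1) * (1 - y)
      else if j.val = 3 then -1
      else if j.val = N + 3 then y / (1 - y)
      else 0
    else
      if j.val = 0 then
        if i.val = 4 then -ρ * (1 - y) else ρ * (1 - y) ^ 2 * y ^ (i.val - 5)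
      else if j.val = i.val then -1 / (1 - y)
      else if j.val + 1 = i.val ∧ 4 ≤ j.val then y / (1 - y)
      else 0

/-- The polynomial `p_N(y) = 1 - (N+1)² y^N + N(2N+3) y^{N+1} - N(N+1) y^{N+2}`. -/
noncomputable def pN (N : ℕ) (y : ℝ) : ℝ :=
  1 - ((N : ℝ) + 1) ^ 2 * y ^ N + (N : ℝ) * (2 * (N : ℝ) + 3) * y ^ (N + 1)
    - (N : ℝ) * ((N : ℝ) + 1) * y ^ (N + 2)


open Matrix Finset

namespace Sil

variable (N : ℕ) (ρ y : ℝ)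

noncomputable def Bm : Matrix (Fin 4) (Fin 4) ℝ :=
  Matrix.of fun i j =>
    if i.val = 0 then
      if j.val = 0 then -ρ
      else if j.val = 1 then -y / (1 - y)
      else if j.val = 2 then 1
      else 0
    else if i.val = 1 then
      if j.val = 1 then -1 else 0
    else if i.val = 2 then
      if j.val = 0 then ρ * y ^ N * (1 + (N : ℝ) * (1 - y))
      else if j.val = 2 then -1
      else if j.val = 3 then y / (1 - y)
      else 0
    else
      if j.val = 0 then ρ * y ^ (N - 1) * (1 - y)
      else if j.val = 3 then -1
      else 0

noncomputable def Cm : Matrix (Fin 4) (Fin (N + 1)) ℝ :=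
  Matrix.of fun i j =>
    if i.val = 2 ∧ j.val = N then (N : ℝ) * y / (1 - y)
    else if i.val = 3 ∧ j.val + 1 = N then y / (1 - y)
    else 0

noncomputable def Dm : Matrix (Fin (N + 1)) (Fin 4) ℝ :=
  Matrix.of fun i j =>
    if j.val = 0 then
      (if i.val = 0 then -ρ * (1 - y) else ρ * (1 - y) ^ 2 * y ^ (i.val - 1))
    else 0

noncomputable def Em : Matrix (Fin (N + 1)) (Fin (N + 1)) ℝ :=
  Matrix.of fun i j =>
    if j.val = i.val then -1 / (1 - y)
    else if i.val = j.val + 1 then y / (1 - y)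
    else 0

noncomputable def Minv : Matrix (Fin (N + 1)) (Fin (N + 1)) ℝ :=
  Matrix.of fun i j =>
    if j.val ≤ i.val then -(1 - y) * y ^ (i.val - j.val) else 0

def emb : Fin 4 ⊕ Fin (N + 1) ≃ Fin (N + 5) where
  toFun := Sum.elim (fun i => ⟨i.val, by omega⟩) (fun i => ⟨i.val + 4, by omega⟩)
  invFun i := if h : i.val < 4 then .inl ⟨i.val, h⟩ else .inr ⟨i.val - 4, by omega⟩
  left_inv i := by
    rcases i with i | i
    · simp [i.isLt]
    · have : ¬ (i.val + 4 < 4) := by omega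
      simp [this]
  right_inv i := by
    by_cases h : i.val < 4
    · simp [h]
    · simp only [dif_neg h]
      apply Fin.ext
      simp
      omega

set_option maxHeartbeats 2000000 in
lemma submx : (Amat N ρ y).submatrix (emb N) (emb N) =
    fromBlocks (Bm N ρ y) (Cm N y) (Dm N ρ y) (Em N y) := by
  ext i j
  rcases i with i | i <;> rcases j with j | j <;>
    simp only [Matrix.submatrix_apply, emb, Equiv.coe_fn_mk, Sum.elim_inl, Sum.elim_inr,
      Matrix.fromBlocks_apply₁₁, Matrix.fromBlocks_apply₁₂, Matrix.fromBlocks_apply₂₁,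
      Matrix.fromBlocks_apply₂₂, Amat, Bm, Cm, Dm, Em, Matrix.of_apply]
  · split_ifs <;> first | rfl | omega | (exact ((by assumption : False)).elim) | (exfalso; omega)
  · split_ifs <;> first | rfl | omega | (exact ((by assumption : False)).elim) | (exfalso; omega)
  · have h45 : i.val + 4 - 5 = i.val - 1 := by omega
    simp only [h45]
    split_ifs <;> first | rfl | omega | (exact ((by assumption : False)).elim) | (exfalso; omega)
  · split_ifs <;> first | rfl | omega | (exact ((by assumption : False)).elim) | (exfalso; omega)


lemma EmMinv (hy1 : (1:ℝ) - y ≠ 0) : Em N y * Minv N y = 1 := by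
  ext i j
  rw [Matrix.mul_apply, Matrix.one_apply]
  by_cases hi : i.val = 0
  · have hsum : (∑ k : Fin (N+1), Em N y i k * Minv N y k j)
        = ∑ k : Fin (N+1), (if k = i then (-1/(1-y)) * Minv N y k j else 0) := by
      refine Finset.sum_congr rfl fun k _ => ?_
      by_cases hk : k = i
      · rw [if_pos hk, hk]
        congr 1
        simp [Em]
      · rw [if_neg hk]
        have h1 : ¬ (k.val = i.val) := fun h => hk (Fin.ext h)
        have h2 : ¬ (i.val = k.val + 1) := by omega
        simp [Em, h1, h2]
    rw [hsum, Finset.sum_ite_eq' Finset.univ i, if_pos (Finset.mem_univ i)]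
    by_cases hj : i = j
    · subst hj
      rw [if_pos rfl]
      simp only [Minv, Matrix.of_apply, le_refl, if_pos, Nat.sub_self, pow_zero]
      field_simp
    · rw [if_neg hj]
      have hj' : ¬ (j.val ≤ i.val) := by
        intro h
        exact hj (Fin.ext (by omega))
      simp only [Minv, Matrix.of_apply, if_neg hj', mul_zero]
  · have hNi : i.val - 1 < N + 1 := by omega
    have hvi' : (⟨i.val - 1, hNi⟩ : Fin (N+1)).val = i.val - 1 := rfl
    have hsum : (∑ k : Fin (N+1), Em N y i k * Minv N y k j)
        = ∑ k : Fin (N+1), ((if k = i then (-1/(1-y)) * Minv N y k j else 0)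
          + (if k = (⟨i.val - 1, hNi⟩ : Fin (N+1)) then (y/(1-y)) * Minv N y k j else 0)) := by
      refine Finset.sum_congr rfl fun k _ => ?_
      by_cases hk : k = i
      · subst hk
        rw [if_pos rfl, if_neg (by intro h; have := congrArg Fin.val h; simp at this; omega),
          add_zero]
        congr 1
        simp [Em]
      · rw [if_neg hk]
        by_cases hk' : k = (⟨i.val - 1, hNi⟩ : Fin (N+1))
        · subst hk'
          rw [if_pos rfl, zero_add]
          congr 1
          have h1 : ¬ ((⟨i.val - 1, hNi⟩ : Fin (N+1)).val = i.val) := by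
            rw [hvi']; omega
          have h2 : i.val = (⟨i.val - 1, hNi⟩ : Fin (N+1)).val + 1 := by
            rw [hvi']; omega
          simp only [Em, Matrix.of_apply]
          rw [if_neg h1, if_pos h2]
        · rw [if_neg hk', add_zero]
          have h1 : ¬ (k.val = i.val) := fun h => hk (Fin.ext h)
          have h2 : ¬ (i.val = k.val + 1) := by
            intro h
            exact hk' (Fin.ext (by rw [hvi']; omega))
          simp only [Em, Matrix.of_apply]
          rw [if_neg h1, if_neg h2, zero_mul]
    rw [hsum, Finset.sum_add_distrib, Finset.sum_ite_eq' Finset.univ i,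
      Finset.sum_ite_eq' Finset.univ (⟨i.val - 1, hNi⟩ : Fin (N+1)),
      if_pos (Finset.mem_univ _), if_pos (Finset.mem_univ _)]
    simp only [Minv, Matrix.of_apply, hvi']
    rcases lt_trichotomy j.val i.val with h | h | h
    · rw [if_pos (le_of_lt h), if_pos (by omega : j.val ≤ i.val - 1),
        if_neg (by intro hh; have := congrArg Fin.val hh; omega)]
      have hexp : i.val - j.val = (i.val - 1 - j.val) + 1 := by omega
      rw [hexp, pow_succ]
      field_simp
      ring
    · rw [if_pos (le_of_eq h), if_neg (by omega : ¬ j.val ≤ i.val - 1),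
        if_pos (Fin.ext h.symm)]
      have hz : i.val - j.val = 0 := by omega
      rw [hz, pow_zero]
      field_simp
      ring
    · rw [if_neg (by omega : ¬ j.val ≤ i.val), if_neg (by omega : ¬ j.val ≤ i.val - 1),
        if_neg (by intro hh; have := congrArg Fin.val hh; omega)]
      simp

lemma detEm : (Em N y).det = (-1/(1-y))^(N+1) := by
  have h : (Em N y).BlockTriangular OrderDual.toDual := by
    intro i j hij
    have hij' : i < j := hij
    have hlt : i.val < j.val := hij'
    have h1 : ¬ (j.val = i.val) := by omega
    have h2 : ¬ (i.val = j.val + 1) := by omega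
    simp [Em, h1, h2]
  rw [Matrix.det_of_lowerTriangular _ h]
  have hd : ∀ i : Fin (N+1), Em N y i i = -1/(1-y) := fun i => by simp [Em]
  rw [Finset.prod_congr rfl (fun i _ => hd i), Finset.prod_const, Finset.card_univ,
    Fintype.card_fin]

lemma MD_apply (i : Fin (N+1)) (j : Fin 4) :
    (Minv N y * Dm N ρ y) i j =
      if j.val = 0 then ρ*(1-y)^2*y^(i.val) - (i.val : ℝ) * (ρ*(1-y)^3*y^(i.val - 1))
      else 0 := by
  rw [Matrix.mul_apply]
  by_cases hj : j.val = 0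
  case neg =>
    rw [if_neg hj]
    apply Finset.sum_eq_zero
    intro k _
    have hj' : j ≠ 0 := fun h => hj (by simp [h])
    simp [Dm, hj, hj']
  rw [if_pos hj]
  set g : ℕ → ℝ := fun k => (if k ≤ i.val then -(1-y)*y^(i.val-k) else 0) *
      (if k = 0 then -ρ*(1-y) else ρ*(1-y)^2*y^(k-1)) with hg
  have h1 : (∑ k : Fin (N+1), Minv N y i k * Dm N ρ y k j)
      = ∑ k ∈ Finset.range (N+1), g k := by
    rw [← Fin.sum_univ_eq_sum_range]
    refine Finset.sum_congr rfl fun k _ => ?_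
    have hj' : j = 0 := Fin.ext hj
    simp [g, Minv, Dm, hj, hj']
  rw [h1]
  have h2 : ∑ k ∈ Finset.range (N+1), g k = ∑ k ∈ Finset.range (i.val+1), g k := by
    refine (Finset.sum_subset (Finset.range_subset_range.mpr (by omega)) ?_).symm
    intro k hk hk'
    rw [Finset.mem_range] at hk hk'
    have hnk : ¬ (k ≤ i.val) := by omega
    simp [g, hnk]
  rw [h2, Finset.sum_range_succ']
  have h3 : ∀ k ∈ Finset.range i.val, g (k+1) = -(ρ*(1-y)^3*y^(i.val-1)) := by
    intro k hk
    rw [Finset.mem_range] at hk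
    have hk1 : k + 1 ≤ i.val := hk
    have hyp : y ^ (i.val - (k+1)) * y ^ k = y ^ (i.val - 1) := by
      rw [← pow_add]; congr 1; omega
    simp only [g, if_pos hk1, if_neg (Nat.succ_ne_zero k), Nat.add_sub_cancel]
    rw [← hyp]
    ring
  rw [Finset.sum_congr rfl h3, Finset.sum_const, Finset.card_range]
  have hg0 : g 0 = -(1-y)*y^(i.val) * (-ρ*(1-y)) := by
    simp only [g, if_pos (Nat.zero_le i.val), Nat.sub_zero]
    norm_num
  rw [hg0, nsmul_eq_mul]
  ring

lemma CMD (hN : 1 ≤ N) :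
    Cm N y * (Minv N y * Dm N ρ y) = Matrix.of fun (i : Fin 4) (j : Fin 4) =>
      if i.val = 2 ∧ j.val = 0 then
        ((N:ℝ)*y/(1-y)) * (ρ*(1-y)^2*y^N - (N:ℝ)*(ρ*(1-y)^3*y^(N-1)))
      else if i.val = 3 ∧ j.val = 0 then
        (y/(1-y)) * (ρ*(1-y)^2*y^(N-1) - ((N-1:ℕ):ℝ)*(ρ*(1-y)^3*y^(N-1-1)))
      else 0 := by
  ext i j
  rw [Matrix.mul_apply, Matrix.of_apply]
  by_cases hi2 : i.val = 2
  · rw [Finset.sum_eq_single (⟨N, by omega⟩ : Fin (N+1))]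
    · have hc : Cm N y i ⟨N, by omega⟩ = (N:ℝ)*y/(1-y) := by simp [Cm, hi2]
      rw [hc, MD_apply]
      by_cases hj : j.val = 0
      · rw [if_pos hj, if_pos ⟨hi2, hj⟩]
      · rw [if_neg hj, if_neg (by simp [hj]), if_neg (by simp [hj]), mul_zero]
    · intro t _ ht
      have h1 : ¬ (t.val = N) := fun h => ht (Fin.ext h)
      have h3 : ¬ (i.val = 3) := by omega
      simp [Cm, hi2, h1, h3]
    · intro h; exact absurd (Finset.mem_univ _) h
  · by_cases hi3 : i.val = 3
    · rw [Finset.sum_eq_single (⟨N-1, by omega⟩ : Fin (N+1))]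
      · have hc : Cm N y i ⟨N-1, by omega⟩ = y/(1-y) := by
          have hnn : (N-1) + 1 = N := by omega
          simp [Cm, hi3, hi2, hnn]
        rw [hc, MD_apply]
        by_cases hj : j.val = 0
        · rw [if_pos hj, if_neg (by simp [hi2]), if_pos ⟨hi3, hj⟩]
        · rw [if_neg hj, if_neg (by simp [hj]), if_neg (by simp [hj]), mul_zero]
      · intro t _ ht
        have h1 : ¬ (t.val + 1 = N) := by
          intro h
          exact ht (Fin.ext (show t.val = N - 1 by omega))
        simp [Cm, hi2, hi3, h1]
      · intro h; exact absurd (Finset.mem_univ _) h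
    · rw [if_neg (by simp [hi2]), if_neg (by simp [hi3])]
      apply Finset.sum_eq_zero
      intro t _
      simp [Cm, hi2, hi3]


lemma det4 (a b c d e f : ℝ) :
    Matrix.det !![a, b, c, 0; 0,-1,0,0; d,0,-1,e; f,0,0,-1] = -a - c*d - c*e*f := by
  simp [Matrix.det_succ_row_zero, Fin.sum_univ_succ, Fin.succAbove, Matrix.vecHead,
    Matrix.vecTail]
  ring

lemma Schur_det (hN : 1 ≤ N) (hy0 : y ≠ 0) (hy1 : (1:ℝ) - y ≠ 0) :
    (Bm N ρ y - Cm N y * (Minv N y * Dm N ρ y)).det = ρ * pN N y := by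
  rw [CMD N ρ y hN]
  have hS : Bm N ρ y - (Matrix.of fun (i : Fin 4) (j : Fin 4) =>
      if i.val = 2 ∧ j.val = 0 then
        ((N:ℝ)*y/(1-y)) * (ρ*(1-y)^2*y^N - (N:ℝ)*(ρ*(1-y)^3*y^(N-1)))
      else if i.val = 3 ∧ j.val = 0 then
        (y/(1-y)) * (ρ*(1-y)^2*y^(N-1) - ((N-1:ℕ):ℝ)*(ρ*(1-y)^3*y^(N-1-1)))
      else 0) =
      !![-ρ, -y / (1 - y), 1, 0;
         0, -1, 0, 0;
         ρ * y ^ N * (1 + (N : ℝ) * (1 - y)) -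
           ((N:ℝ)*y/(1-y)) * (ρ*(1-y)^2*y^N - (N:ℝ)*(ρ*(1-y)^3*y^(N-1))), 0, -1, y / (1 - y);
         ρ * y ^ (N - 1) * (1 - y) -
           (y/(1-y)) * (ρ*(1-y)^2*y^(N-1) - ((N-1:ℕ):ℝ)*(ρ*(1-y)^3*y^(N-1-1))), 0, 0, -1] := by
    ext i j
    fin_cases i <;> fin_cases j <;>
      simp [Bm, Matrix.sub_apply, Matrix.vecHead, Matrix.vecTail, Fin.val_zero, Fin.val_one,
        Fin.val_two, show ((3:Fin 4)).val = 3 from rfl] <;> norm_num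
  rw [hS, det4]
  rw [show ((N-1:ℕ):ℝ) = (N:ℝ) - 1 by rw [Nat.cast_sub hN]; norm_num]
  rcases eq_or_lt_of_le hN with h1 | h2
  · subst h1
    simp only [pN]
    norm_num
    field_simp
    ring
  · have e0 : N - 1 - 1 = N - 2 := by omega
    have e1 : y^(N-1) = y^(N-2)*y := by rw [← pow_succ]; congr 1; omega
    have e2 : y^N = y^(N-2)*y^2 := by rw [← pow_add]; congr 1; omega
    have e3 : y^(N+1) = y^(N-2)*y^3 := by rw [← pow_add]; congr 1; omega
    have e4 : y^(N+2) = y^(N-2)*y^4 := by rw [← pow_add]; congr 1; omega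
    simp only [pN]
    rw [e0, e1, e2, e3, e4]
    field_simp
    ring

lemma detAmat (hN : 1 ≤ N) (hy0 : y ≠ 0) (hy1 : (1:ℝ) - y ≠ 0) :
    (Amat N ρ y).det = (-1/(1-y))^(N+1) * (ρ * pN N y) := by
  have hME := EmMinv N y hy1
  haveI : Invertible (Em N y) := invertibleOfRightInverse _ _ hME
  have hInv : ⅟(Em N y) = Minv N y := by
    rw [Matrix.invOf_eq_nonsing_inv, Matrix.inv_eq_right_inv hME]
  rw [← Matrix.det_submatrix_equiv_self (emb N) (Amat N ρ y), submx,
    Matrix.det_fromBlocks₂₂, hInv, detEm, Matrix.mul_assoc,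
    Schur_det N ρ y hN hy0 hy1]

lemma eval_charpoly {m : ℕ} (M : Matrix (Fin m) (Fin m) ℝ) (x : ℝ) :
    M.charpoly.eval x = (x • (1 : Matrix (Fin m) (Fin m) ℝ) - M).det := by
  rw [Matrix.charpoly, eval_det, Matrix.matPolyEquiv_charmatrix]
  congr 1
  rw [Polynomial.eval_sub, Polynomial.eval_X, Polynomial.eval_C]
  congr 1
  ext i j
  simp [Matrix.scalar_apply, Matrix.smul_apply, Matrix.one_apply, Matrix.diagonal_apply]

end Sil

theorem stmt17 (N : ℕ) (hN : 1 ≤ N) (ρ y : ℝ) (hρ : 0 < ρ) (hy : y ∈ Set.Ioo (0 : ℝ) 1)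
    (hp : pN N y < 0) :
    ∃ lam : ℝ, 0 < lam ∧ (Amat N ρ y - lam • 1).det = 0 := by
  obtain ⟨hy0, hylt⟩ := hy
  have h1y : (0:ℝ) < 1 - y := by linarith
  have hy1 : (1:ℝ) - y ≠ 0 := ne_of_gt h1y
  set q := (Amat N ρ y).charpoly with hq
  have hmon : q.Monic := Matrix.charpoly_monic _
  have hdeg : q.natDegree = N + 5 := by
    rw [hq, Matrix.charpoly_natDegree_eq_dim, Fintype.card_fin]
  have hdetA := Sil.detAmat N ρ y hN (ne_of_gt hy0) hy1
  have hq0 : q.eval 0 < 0 := by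
    have hds := Matrix.det_eq_sign_charpoly_coeff (Amat N ρ y)
    rw [Polynomial.coeff_zero_eq_eval_zero, Fintype.card_fin] at hds
    have hsq : ((-1:ℝ))^(N+5) * ((-1:ℝ))^(N+5) = 1 := by
      rw [← pow_add]
      exact Even.neg_one_pow ⟨N+5, by ring⟩
    have heval : q.eval 0 = (-1:ℝ)^(N+5) * (Amat N ρ y).det := by
      rw [hds, ← mul_assoc, hsq, one_mul]
    rw [heval, hdetA]
    have key : (-1:ℝ)^(N+5) * ((-1/(1-y))^(N+1) * (ρ * pN N y))
        = (1/(1-y))^(N+1) * (ρ * pN N y) := by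
      have hr : (-1/(1-y) : ℝ) = (-1) * (1/(1-y)) := by ring
      have he : ((-1:ℝ))^(N+5) * ((-1:ℝ))^(N+1) = 1 := by
        rw [← pow_add]
        exact Even.neg_one_pow ⟨N+3, by ring⟩
      calc (-1:ℝ)^(N+5) * ((-1/(1-y))^(N+1) * (ρ * pN N y))
          = ((-1:ℝ)^(N+5) * (-1:ℝ)^(N+1)) * ((1/(1-y))^(N+1) * (ρ * pN N y)) := by
            rw [hr, mul_pow]; ring
        _ = (1/(1-y))^(N+1) * (ρ * pN N y) := by rw [he, one_mul]
    rw [key]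
    have hpos : (0:ℝ) < (1/(1-y))^(N+1) := pow_pos (by positivity) _
    exact mul_neg_of_pos_of_neg hpos (mul_neg_of_pos_of_neg hρ hp)
  have hdegpos : 0 < q.degree := by
    apply Polynomial.natDegree_pos_iff_degree_pos.mp
    omega
  have htop : Filter.Tendsto (fun x => q.eval x) Filter.atTop Filter.atTop :=
    Polynomial.tendsto_atTop_of_leadingCoeff_nonneg q hdegpos
      (by rw [hmon.leadingCoeff]; norm_num)
  obtain ⟨b, hb1, hb2⟩ :=
    ((htop.eventually_gt_atTop 0).and (Filter.eventually_gt_atTop 0)).exists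
  have hI := intermediate_value_Ioo (le_of_lt hb2) (q.continuous.continuousOn)
  obtain ⟨lam, hmem, hev⟩ := hI ⟨hq0, hb1⟩
  refine ⟨lam, hmem.1, ?_⟩
  have h2 : (Amat N ρ y - lam • 1)
      = -(lam • (1 : Matrix (Fin (N+5)) (Fin (N+5)) ℝ) - Amat N ρ y) := by
    rw [neg_sub]
  have hev' : q.eval lam = 0 := hev
  rw [h2, Matrix.det_neg, ← Sil.eval_charpoly, ← hq, hev', mul_zero]
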